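/- Convergence of the rescaled counting measures: letting μ_n := Σ_{x∈V_n} δ_x denote the counting measure on the vertex set V_n (placing mass one on each vertex), there exists a constant c_μ ∈ (0,∞) such that the finite measures c_μ^{-1} N^{-n} μ_n on ℝ^d converge weakly, as n → ∞, to the self-similar probability measure μ on F. -/

import Mathlib

open Finset Filter MeasureTheory
open scoped ENNReal RealInnerProductSpace BigOperators Classical

noncomputable section

variable {d N : ℕ}

/-- The composition `ψ_{i₁} ∘ ⋯ ∘ ψ_{iₙ}` along a word `w = (i₁, …, iₙ)`. -/
def psiWord (ψ : Fin N → EuclideanSpace ℝ (Fin d) → EuclideanSpace ℝ (Fin d)) :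
    List (Fin N) → EuclideanSpace ℝ (Fin d) → EuclideanSpace ℝ (Fin d)
  | [] => id
  | i :: w => ψ i ∘ psiWord ψ w

/-- The set of fixed points of the maps `ψ_i`. -/
def fixPts (ψ : Fin N → EuclideanSpace ℝ (Fin d) → EuclideanSpace ℝ (Fin d)) :
    Set (EuclideanSpace ℝ (Fin d)) :=
  {x | ∃ i, ψ i x = x}

/-- The set `V_0` of essential fixed points: fixed points `x` such that `ψ_i(x) = ψ_j(y)` for
some `i ≠ j` and some fixed point `y`. -/
def essFixPts (ψ : Fin N → EuclideanSpace ℝ (Fin d) → EuclideanSpace ℝ (Fin d)) :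
    Set (EuclideanSpace ℝ (Fin d)) :=
  {x | x ∈ fixPts ψ ∧ ∃ i j, i ≠ j ∧ ∃ y ∈ fixPts ψ, ψ i x = ψ j y}

/-- The vertex sets `V_n`: `V_0` is the set of essential fixed points and
`V_{n+1} = ⋃_i ψ_i(V_n)`. -/
def Vseq (ψ : Fin N → EuclideanSpace ℝ (Fin d) → EuclideanSpace ℝ (Fin d)) :
    ℕ → Set (EuclideanSpace ℝ (Fin d))
  | 0 => essFixPts ψ
  | n + 1 => ⋃ i, ψ i '' Vseq ψ n

/-- An `n`-cell is a set of the form `ψ_w(V_0)` for a word `w` of length `n`. -/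
def IsCell (ψ : Fin N → EuclideanSpace ℝ (Fin d) → EuclideanSpace ℝ (Fin d)) (n : ℕ)
    (C : Set (EuclideanSpace ℝ (Fin d))) : Prop :=
  ∃ w : List (Fin N), w.length = n ∧ C = psiWord ψ w '' essFixPts ψ

/-- The signed distance-like quantity determining on which side of the hyperplane `H_{xy}`
perpendicularly bisecting `x` and `y` a point `z` lies (`z ∈ H_{xy}` iff it vanishes). -/
def sideVal (x y z : EuclideanSpace ℝ (Fin d)) : ℝ :=
  ⟪z - midpoint ℝ x y, y - x⟫

/-- Reflection `U_{xy}` in the hyperplane perpendicularly bisecting `x` and `y`. -/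
def reflectPB (x y z : EuclideanSpace ℝ (Fin d)) : EuclideanSpace ℝ (Fin d) :=
  z - ((2 * sideVal x y z) / ⟪y - x, y - x⟫) • (y - x)

/-- The axioms of a nested fractal (Lindstrøm): `(ψ_i)` is a family of contracting similitudes
with ratio `β⁻¹`, `F` is the associated attractor, `|V_0| ≥ 2`, and the open set condition,
connectivity, symmetry and nesting axioms hold. -/
structure IsNestedFractal (β : ℝ)
    (ψ : Fin N → EuclideanSpace ℝ (Fin d) → EuclideanSpace ℝ (Fin d))
    (F : Set (EuclideanSpace ℝ (Fin d))) : Prop where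
  beta_gt_one : 1 < β
  similitude : ∀ i, ∃ U : EuclideanSpace ℝ (Fin d) ≃ₗᵢ[ℝ] EuclideanSpace ℝ (Fin d),
    ∃ γ : EuclideanSpace ℝ (Fin d), ∀ x, ψ i x = β⁻¹ • U x + γ
  F_nonempty : F.Nonempty
  F_compact : IsCompact F
  F_invariant : F = ⋃ i, ψ i '' F
  v0_nontrivial : (essFixPts ψ).Nontrivial
  open_set_condition : ∃ W : Set (EuclideanSpace ℝ (Fin d)), W.Nonempty ∧ IsOpen W ∧
    Bornology.IsBounded W ∧ (Pairwise fun i j => Disjoint (ψ i '' W) (ψ j '' W)) ∧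
    (⋃ i, ψ i '' W) ⊆ W
  connectivity : ∀ i i' : Fin N, ∃ (n : ℕ) (seq : ℕ → Fin N), seq 0 = i ∧ seq n = i' ∧
    ∀ k < n, ((ψ (seq k) '' essFixPts ψ) ∩ (ψ (seq (k + 1)) '' essFixPts ψ)).Nonempty
  symmetry : ∀ x ∈ essFixPts ψ, ∀ y ∈ essFixPts ψ, x ≠ y →
    ∀ (n : ℕ) (C : Set (EuclideanSpace ℝ (Fin d))), IsCell ψ n C →
      IsCell ψ n (reflectPB x y '' C) ∧
        ((∃ a ∈ C, 0 < sideVal x y a) → (∃ b ∈ C, sideVal x y b < 0) →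
          reflectPB x y '' C = C)
  nesting : ∀ n : ℕ, 1 ≤ n → ∀ w w' : List (Fin N), w.length = n → w'.length = n → w ≠ w' →
    (psiWord ψ w '' F) ∩ (psiWord ψ w' '' F) =
      (psiWord ψ w '' essFixPts ψ) ∩ (psiWord ψ w' '' essFixPts ψ)

/-- The quadratic form `E_0(f) = (1/2) Σ_{x,y ∈ V_0} q_{x,y} (f(x) - f(y))²` on functions,
where `V0` is a finite vertex set. -/
def en0 (V0 : Finset (EuclideanSpace ℝ (Fin d)))
    (q : EuclideanSpace ℝ (Fin d) → EuclideanSpace ℝ (Fin d) → ℝ)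
    (f : EuclideanSpace ℝ (Fin d) → ℝ) : ℝ :=
  (1 / 2) * ∑ x ∈ V0, ∑ y ∈ V0, q x y * (f x - f y) ^ 2

/-- The renormalised form `Ẽ_0(f) = inf { Σ_{i∈I} E_0(g ∘ ψ_i) : g|_{V_0} = f }` (functions on
`V_1` are represented by functions on `ℝ^d`; `E_0` only depends on values on `V_0`). -/
def en0tilde (ψ : Fin N → EuclideanSpace ℝ (Fin d) → EuclideanSpace ℝ (Fin d))
    (V0 : Finset (EuclideanSpace ℝ (Fin d)))
    (q : EuclideanSpace ℝ (Fin d) → EuclideanSpace ℝ (Fin d) → ℝ)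
    (f : EuclideanSpace ℝ (Fin d) → ℝ) : ℝ :=
  sInf {t | ∃ g : EuclideanSpace ℝ (Fin d) → ℝ,
    (∀ x ∈ V0, g x = f x) ∧ t = ∑ i : Fin N, en0 V0 q (g ∘ ψ i)}

/-- The level-`n` energy `E_n(f) := ρ^n Σ_{w ∈ Iⁿ} E_0(f ∘ ψ_w)`. -/
def enLevel (ψ : Fin N → EuclideanSpace ℝ (Fin d) → EuclideanSpace ℝ (Fin d))
    (V0 : Finset (EuclideanSpace ℝ (Fin d)))
    (q : EuclideanSpace ℝ (Fin d) → EuclideanSpace ℝ (Fin d) → ℝ) (ρ : ℝ) (n : ℕ)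
    (f : EuclideanSpace ℝ (Fin d) → ℝ) : ℝ :=
  ρ ^ n * ∑ w : Fin n → Fin N, en0 V0 q (f ∘ psiWord ψ (List.ofFn w))

/-- The level-`n` effective resistance
`R_n(x,y) := (inf {E_n(f) : f(x) = 1, f(y) = 0})⁻¹` for `x ≠ y`, with `R_n(x,x) := 0`. -/
def resLevel (ψ : Fin N → EuclideanSpace ℝ (Fin d) → EuclideanSpace ℝ (Fin d))
    (V0 : Finset (EuclideanSpace ℝ (Fin d)))
    (q : EuclideanSpace ℝ (Fin d) → EuclideanSpace ℝ (Fin d) → ℝ) (ρ : ℝ) (n : ℕ)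
    (x y : EuclideanSpace ℝ (Fin d)) : ℝ :=
  if x = y then 0
  else (sInf {t | ∃ f : EuclideanSpace ℝ (Fin d) → ℝ,
    f x = 1 ∧ f y = 0 ∧ t = enLevel ψ V0 q ρ n f})⁻¹

end

noncomputable section NFAux

variable {d N : ℕ} {β : ℝ} {ψ : Fin N → EuclideanSpace ℝ (Fin d) → EuclideanSpace ℝ (Fin d)}
  {F : Set (EuclideanSpace ℝ (Fin d))}

local notation "E" => EuclideanSpace ℝ (Fin d)

lemma NF.beta_pos (hnf : IsNestedFractal β ψ F) : (0:ℝ) < β :=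
  lt_trans one_pos hnf.beta_gt_one

lemma NF.dist_psi (hnf : IsNestedFractal β ψ F) (i : Fin N) (x y : E) :
    dist (ψ i x) (ψ i y) = β⁻¹ * dist x y := by
  obtain ⟨U, γ, hU⟩ := hnf.similitude i
  have hb : (0:ℝ) < β⁻¹ := inv_pos.mpr (NF.beta_pos hnf)
  rw [hU, hU, dist_eq_norm, dist_eq_norm]
  have : β⁻¹ • U x + γ - (β⁻¹ • U y + γ) = β⁻¹ • (U x - U y) := by
    rw [smul_sub]; abel
  rw [this, ← map_sub, norm_smul, U.norm_map, Real.norm_eq_abs, abs_of_pos hb]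

lemma NF.psi_injective (hnf : IsNestedFractal β ψ F) (i : Fin N) :
    Function.Injective (ψ i) := by
  intro x y h
  have := NF.dist_psi hnf i x y
  rw [h, dist_self] at this
  have hb : β⁻¹ ≠ 0 := ne_of_gt (inv_pos.mpr (NF.beta_pos hnf))
  have hd : dist x y = 0 := by
    have hbp : 0 < β⁻¹ := inv_pos.mpr (NF.beta_pos hnf)
    nlinarith [dist_nonneg (x := x) (y := y)]
  exact dist_eq_zero.mp hd

lemma NF.psi_continuous (hnf : IsNestedFractal β ψ F) (i : Fin N) :
    Continuous (ψ i) := by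
  obtain ⟨U, γ, hU⟩ := hnf.similitude i
  have : ψ i = fun x => β⁻¹ • U x + γ := funext hU
  rw [this]
  exact (U.continuous.const_smul β⁻¹).add continuous_const

lemma NF.psi_maps_F (hnf : IsNestedFractal β ψ F) (i : Fin N) {x : E} (hx : x ∈ F) :
    ψ i x ∈ F := by
  have : ψ i x ∈ ⋃ j, ψ j '' F := Set.mem_iUnion.mpr ⟨i, x, hx, rfl⟩
  rwa [← hnf.F_invariant] at this

lemma NF.fixPt_mem_F (hnf : IsNestedFractal β ψ F) {i : Fin N} {x : E} (hx : ψ i x = x) :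
    x ∈ F := by
  obtain ⟨y, hy⟩ := hnf.F_nonempty
  have hmem : ∀ n, (ψ i)^[n] y ∈ F := by
    intro n; induction n with
    | zero => exact hy
    | succ n ih => rw [Function.iterate_succ_apply']; exact NF.psi_maps_F hnf i ih
  have hdist : ∀ n, dist ((ψ i)^[n] y) x = β⁻¹ ^ n * dist y x := by
    intro n; induction n with
    | zero => simp
    | succ n ih =>
      rw [Function.iterate_succ_apply']
      calc dist (ψ i ((ψ i)^[n] y)) x = dist (ψ i ((ψ i)^[n] y)) (ψ i x) := by rw [hx]
        _ = β⁻¹ * dist ((ψ i)^[n] y) x := NF.dist_psi hnf i _ _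
        _ = β⁻¹ ^ (n+1) * dist y x := by rw [ih]; ring
  have hb0 : (0:ℝ) ≤ β⁻¹ := le_of_lt (inv_pos.mpr (NF.beta_pos hnf))
  have hb1 : β⁻¹ < 1 := inv_lt_one_of_one_lt₀ hnf.beta_gt_one
  have htend : Tendsto (fun n => (ψ i)^[n] y) atTop (nhds x) := by
    rw [tendsto_iff_dist_tendsto_zero]
    have : Tendsto (fun n => β⁻¹ ^ n * dist y x) atTop (nhds (0 * dist y x)) :=
      (tendsto_pow_atTop_nhds_zero_of_lt_one hb0 hb1).mul_const _
    rw [zero_mul] at this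
    exact this.congr (fun n => (hdist n).symm)
  exact hnf.F_compact.isClosed.mem_of_tendsto htend (Filter.Eventually.of_forall hmem)

lemma NF.one_lt_N (hnf : IsNestedFractal β ψ F) : 1 < N := by
  obtain ⟨x, hx, -⟩ := hnf.v0_nontrivial
  obtain ⟨-, i, j, hij, -⟩ := hx
  have := Fintype.one_lt_card_iff_nontrivial.mpr ⟨i, j, hij⟩
  simpa using this

lemma NF.essFixPts_finite (hnf : IsNestedFractal β ψ F) : (essFixPts ψ).Finite := by
  have : essFixPts ψ ⊆ ⋃ i : Fin N, {x | ψ i x = x} := by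
    rintro x ⟨⟨i, hi⟩, -⟩; exact Set.mem_iUnion.mpr ⟨i, hi⟩
  refine Set.Finite.subset (Set.finite_iUnion fun i => ?_) this
  apply Set.Subsingleton.finite
  intro x hx y hy
  have h := NF.dist_psi hnf i x y
  rw [hx, hy] at h
  have hb1 : β⁻¹ < 1 := inv_lt_one_of_one_lt₀ hnf.beta_gt_one
  by_contra hne
  have hd : 0 < dist x y := dist_pos.mpr hne
  nlinarith [h]

/-- Words applied as maps. -/
lemma NF.psiWord_append (w w' : List (Fin N)) :
    psiWord ψ (w ++ w') = psiWord ψ w ∘ psiWord ψ w' := by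
  induction w with
  | nil => rfl
  | cons i w ih => simp [psiWord, ih, Function.comp_assoc]

lemma NF.dist_psiWord (hnf : IsNestedFractal β ψ F) (w : List (Fin N)) (x y : E) :
    dist (psiWord ψ w x) (psiWord ψ w y) = β⁻¹ ^ w.length * dist x y := by
  induction w with
  | nil => simp [psiWord]
  | cons i w ih =>
    simp only [psiWord, Function.comp_apply, List.length_cons]
    rw [NF.dist_psi hnf, ih]; ring

lemma NF.psiWord_mem_F (hnf : IsNestedFractal β ψ F) (w : List (Fin N)) {x : E}
    (hx : x ∈ F) : psiWord ψ w x ∈ F := by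
  induction w with
  | nil => exact hx
  | cons i w ih => exact NF.psi_maps_F hnf i ih

lemma NF.psiWord_continuous (hnf : IsNestedFractal β ψ F) (w : List (Fin N)) :
    Continuous (psiWord ψ w) := by
  induction w with
  | nil => exact continuous_id
  | cons i w ih => exact (NF.psi_continuous hnf i).comp ih

lemma NF.ofFn_cons {n : ℕ} (i : Fin N) (w : Fin n → Fin N) :
    List.ofFn (Fin.cons i w : Fin (n+1) → Fin N) = i :: List.ofFn w := by
  rw [List.ofFn_succ]
  simp

end NFAux

noncomputable section NFComb

variable {d N : ℕ} {β : ℝ} {ψ : Fin N → EuclideanSpace ℝ (Fin d) → EuclideanSpace ℝ (Fin d)}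
  {F : Set (EuclideanSpace ℝ (Fin d))}

local notation "E" => EuclideanSpace ℝ (Fin d)

def VFin (ψ : Fin N → EuclideanSpace ℝ (Fin d) → EuclideanSpace ℝ (Fin d))
    (V0 : Finset (EuclideanSpace ℝ (Fin d))) : ℕ → Finset (EuclideanSpace ℝ (Fin d))
  | 0 => V0
  | n + 1 => Finset.univ.biUnion (fun i : Fin N => ((VFin ψ V0 n).image (ψ i)))

def BFin (ψ : Fin N → EuclideanSpace ℝ (Fin d) → EuclideanSpace ℝ (Fin d))
    (V0 : Finset (EuclideanSpace ℝ (Fin d))) : Finset (EuclideanSpace ℝ (Fin d)) :=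
  Finset.univ.biUnion (fun i : Fin N => Finset.univ.biUnion (fun j : Fin N =>
    if i ≠ j then (V0.image (ψ i) ∩ V0.image (ψ j)) else ∅))

def cnt (ψ : Fin N → EuclideanSpace ℝ (Fin d) → EuclideanSpace ℝ (Fin d))
    (V0 : Finset (EuclideanSpace ℝ (Fin d))) (n : ℕ) (b : EuclideanSpace ℝ (Fin d)) : ℕ :=
  (Finset.univ.filter fun i : Fin N => b ∈ (VFin ψ V0 n).image (ψ i)).card

lemma VFin_coe {V0 : Finset E} (hV0 : ↑V0 = essFixPts ψ) :
    ∀ n, ↑(VFin ψ V0 n) = Vseq ψ n := by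
  intro n; induction n with
  | zero => exact hV0
  | succ n ih => simp [VFin, Vseq, Finset.coe_biUnion, Finset.coe_image, ih]

lemma V0_subset_VFin {V0 : Finset E} (hV0 : ↑V0 = essFixPts ψ) :
    ∀ n, V0 ⊆ VFin ψ V0 n := by
  intro n; induction n with
  | zero => exact Finset.Subset.refl _
  | succ n ih =>
    intro x hx
    have hx' : x ∈ essFixPts ψ := by rw [← hV0]; exact hx
    obtain ⟨⟨i, hi⟩, -⟩ := hx'
    refine Finset.mem_biUnion.mpr ⟨i, Finset.mem_univ i, ?_⟩
    exact Finset.mem_image.mpr ⟨x, ih hx, hi⟩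

lemma VFin_mono_succ {V0 : Finset E} (hV0 : ↑V0 = essFixPts ψ) (n : ℕ) :
    VFin ψ V0 n ⊆ VFin ψ V0 (n + 1) := by
  induction n with
  | zero => exact V0_subset_VFin hV0 1
  | succ n ih =>
    intro x hx
    obtain ⟨i, -, hx⟩ := Finset.mem_biUnion.mp hx
    obtain ⟨y, hy, rfl⟩ := Finset.mem_image.mp hx
    exact Finset.mem_biUnion.mpr ⟨i, Finset.mem_univ i,
      Finset.mem_image.mpr ⟨y, ih hy, rfl⟩⟩

lemma VFin_mono {V0 : Finset E} (hV0 : ↑V0 = essFixPts ψ) {j n : ℕ} (h : j ≤ n) :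
    VFin ψ V0 j ⊆ VFin ψ V0 n := by
  induction h with
  | refl => exact Finset.Subset.refl _
  | step h ih => exact ih.trans (VFin_mono_succ hV0 _)

lemma VFin_subset_F (hnf : IsNestedFractal β ψ F) {V0 : Finset E}
    (hV0 : ↑V0 = essFixPts ψ) : ∀ n, ∀ x ∈ VFin ψ V0 n, x ∈ F := by
  intro n; induction n with
  | zero =>
    intro x hx
    have hx' : x ∈ essFixPts ψ := by rw [← hV0]; exact hx
    obtain ⟨⟨i, hi⟩, -⟩ := hx'
    exact NF.fixPt_mem_F hnf hi
  | succ n ih =>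
    intro x hx
    obtain ⟨i, -, hx⟩ := Finset.mem_biUnion.mp hx
    obtain ⟨y, hy, rfl⟩ := Finset.mem_image.mp hx
    exact NF.psi_maps_F hnf i (ih y hy)

lemma mem_BFin {V0 : Finset E} {b : E} :
    b ∈ BFin ψ V0 ↔ ∃ i j : Fin N, i ≠ j ∧ b ∈ V0.image (ψ i) ∧ b ∈ V0.image (ψ j) := by
  constructor
  · intro hb
    obtain ⟨i, -, hb⟩ := Finset.mem_biUnion.mp hb
    obtain ⟨j, -, hb⟩ := Finset.mem_biUnion.mp hb
    by_cases hij : i ≠ j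
    · rw [if_pos hij] at hb
      exact ⟨i, j, hij, Finset.mem_inter.mp hb⟩
    · rw [if_neg hij] at hb; exact absurd hb (Finset.notMem_empty b)
  · rintro ⟨i, j, hij, h1, h2⟩
    refine Finset.mem_biUnion.mpr ⟨i, Finset.mem_univ i, ?_⟩
    refine Finset.mem_biUnion.mpr ⟨j, Finset.mem_univ j, ?_⟩
    rw [if_pos hij]
    exact Finset.mem_inter.mpr ⟨h1, h2⟩

lemma BFin_subset_VFin {V0 : Finset E} (hV0 : ↑V0 = essFixPts ψ) (n : ℕ) :
    BFin ψ V0 ⊆ VFin ψ V0 (n + 1) := by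
  intro b hb
  obtain ⟨i, j, hij, h1, -⟩ := mem_BFin.mp hb
  obtain ⟨y, hy, rfl⟩ := Finset.mem_image.mp h1
  exact Finset.mem_biUnion.mpr ⟨i, Finset.mem_univ i,
    Finset.mem_image.mpr ⟨y, V0_subset_VFin hV0 n hy, rfl⟩⟩

lemma cnt_mono {V0 : Finset E} (hV0 : ↑V0 = essFixPts ψ) (b : E) :
    Monotone (fun n => cnt ψ V0 n b) := by
  apply monotone_nat_of_le_succ
  intro n
  apply Finset.card_le_card
  intro i hi
  simp only [Finset.mem_filter] at hi ⊢
  refine ⟨hi.1, ?_⟩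
  exact Finset.image_subset_image (VFin_mono_succ hV0 n) hi.2

lemma cnt_le_N {V0 : Finset E} (n : ℕ) (b : E) : cnt ψ V0 n b ≤ N := by
  calc cnt ψ V0 n b ≤ (Finset.univ : Finset (Fin N)).card := Finset.card_filter_le _ _
    _ = N := by simp

lemma cnt_pos {V0 : Finset E} (hV0 : ↑V0 = essFixPts ψ) (n : ℕ) {b : E}
    (hb : b ∈ BFin ψ V0) : 1 ≤ cnt ψ V0 n b := by
  obtain ⟨i, j, hij, h1, -⟩ := mem_BFin.mp hb
  refine Finset.card_pos.mpr ⟨i, ?_⟩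
  simp only [Finset.mem_filter]
  exact ⟨Finset.mem_univ i, Finset.image_subset_image (V0_subset_VFin hV0 n) h1⟩

lemma psiWord_single (i : Fin N) : psiWord ψ [i] = ψ i := by
  funext x; rfl

/-- If `b` lies in two distinct level-1 images of `Vₙ`, then `b ∈ BFin`. -/
lemma mem_BFin_of_two (hnf : IsNestedFractal β ψ F) {V0 : Finset E}
    (hV0 : ↑V0 = essFixPts ψ) {n : ℕ} {b : E} {i j : Fin N} (hij : i ≠ j)
    (hi : b ∈ (VFin ψ V0 n).image (ψ i)) (hj : b ∈ (VFin ψ V0 n).image (ψ j)) :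
    b ∈ BFin ψ V0 := by
  obtain ⟨u, hu, rfl⟩ := Finset.mem_image.mp hi
  obtain ⟨v, hv, hvj⟩ := Finset.mem_image.mp hj
  have huF : u ∈ F := VFin_subset_F hnf hV0 n u hu
  have hvF : v ∈ F := VFin_subset_F hnf hV0 n v hv
  have hmem : ψ i u ∈ (psiWord ψ [i] '' F) ∩ (psiWord ψ [j] '' F) := by
    rw [psiWord_single, psiWord_single]
    exact ⟨⟨u, huF, rfl⟩, ⟨v, hvF, hvj⟩⟩
  have hne : ([i] : List (Fin N)) ≠ [j] := by simpa using hij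
  rw [hnf.nesting 1 le_rfl [i] [j] rfl rfl hne] at hmem
  rw [psiWord_single, psiWord_single] at hmem
  obtain ⟨⟨p, hp, hpe⟩, ⟨q, hq, hqe⟩⟩ := hmem
  refine mem_BFin.mpr ⟨i, j, hij, ?_, ?_⟩
  · exact Finset.mem_image.mpr ⟨p, by rw [← Finset.mem_coe, hV0]; exact hp, hpe⟩
  · exact Finset.mem_image.mpr ⟨q, by rw [← Finset.mem_coe, hV0]; exact hq, hqe⟩

/-- One-step counting identity. -/
lemma step_identity (hnf : IsNestedFractal β ψ F) {V0 : Finset E}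
    (hV0 : ↑V0 = essFixPts ψ) (n : ℕ) (f : E → ℝ) :
    ∑ x ∈ VFin ψ V0 (n+1), f x
      = (∑ i : Fin N, ∑ x ∈ VFin ψ V0 n, f (ψ i x))
        - ∑ b ∈ BFin ψ V0, ((cnt ψ V0 n b : ℝ) - 1) * f b := by
  have himg : ∀ i : Fin N, (VFin ψ V0 n).image (ψ i) ⊆ VFin ψ V0 (n+1) := by
    intro i y hy
    exact Finset.mem_biUnion.mpr ⟨i, Finset.mem_univ i, hy⟩
  have h1 : ∑ i : Fin N, ∑ x ∈ VFin ψ V0 n, f (ψ i x)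
      = ∑ y ∈ VFin ψ V0 (n+1), (cnt ψ V0 n y : ℝ) * f y := by
    have : ∀ i : Fin N, ∑ x ∈ VFin ψ V0 n, f (ψ i x)
        = ∑ y ∈ VFin ψ V0 (n+1), if y ∈ (VFin ψ V0 n).image (ψ i) then f y else 0 := by
      intro i
      rw [Finset.sum_ite_mem, Finset.inter_eq_right.mpr (himg i),
        Finset.sum_image (fun x _ y _ h => NF.psi_injective hnf i h)]
    rw [Finset.sum_congr rfl (fun i _ => this i), Finset.sum_comm]
    refine Finset.sum_congr rfl (fun y _ => ?_)
    rw [cnt, Finset.card_filter]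
    push_cast
    rw [Finset.sum_mul]
    refine Finset.sum_congr rfl (fun i _ => ?_)
    split <;> simp
  have h2 : ∑ b ∈ BFin ψ V0, ((cnt ψ V0 n b : ℝ) - 1) * f b
      = ∑ y ∈ VFin ψ V0 (n+1), ((cnt ψ V0 n y : ℝ) - 1) * f y := by
    apply Finset.sum_subset (BFin_subset_VFin hV0 n)
    intro y hy hyB
    have hge : 1 ≤ cnt ψ V0 n y := by
      obtain ⟨i, -, hi⟩ := Finset.mem_biUnion.mp hy
      exact Finset.card_pos.mpr ⟨i, Finset.mem_filter.mpr ⟨Finset.mem_univ i, hi⟩⟩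
    have hle : cnt ψ V0 n y ≤ 1 := by
      by_contra hlt
      push_neg at hlt
      obtain ⟨i, hi, j, hj, hij⟩ := Finset.one_lt_card.mp hlt
      simp only [Finset.mem_filter] at hi hj
      exact hyB (mem_BFin_of_two hnf hV0 hij hi.2 hj.2)
    have : cnt ψ V0 n y = 1 := le_antisymm hle hge
    rw [this]; push_cast; ring
  rw [h1, h2, ← Finset.sum_sub_distrib]
  refine Finset.sum_congr rfl (fun y _ => ?_)
  ring

end NFComb

noncomputable section NFMore

variable {d N : ℕ} {β : ℝ} {ψ : Fin N → EuclideanSpace ℝ (Fin d) → EuclideanSpace ℝ (Fin d)}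
  {F : Set (EuclideanSpace ℝ (Fin d))}

local notation "E" => EuclideanSpace ℝ (Fin d)

/-- Splitting a sum over words of length `t+1` into first letter and tail. -/
lemma word_sum_split {t : ℕ} (g : (Fin (t+1) → Fin N) → ℝ) :
    ∑ w : Fin (t+1) → Fin N, g w
      = ∑ i : Fin N, ∑ w : Fin t → Fin N, g (Fin.cons i w) := by
  calc ∑ w : Fin (t+1) → Fin N, g w
      = ∑ p : Fin N × (Fin t → Fin N), g (Fin.cons p.1 p.2) :=
        (Fintype.sum_equiv (Fin.consEquiv (fun _ => Fin N)) _ g (fun p => rfl)).symm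
    _ = ∑ i : Fin N, ∑ w : Fin t → Fin N, g (Fin.cons i w) := Fintype.sum_prod_type _

lemma psiWord_cons_apply {t : ℕ} (i : Fin N) (w : Fin t → Fin N) (x : E) :
    psiWord ψ (List.ofFn (Fin.cons i w : Fin (t+1) → Fin N)) x
      = ψ i (psiWord ψ (List.ofFn w) x) := by
  rw [NF.ofFn_cons]
  rfl

/-- The fully unrolled counting identity from level `K` upwards, assuming the overlap counts
have stabilised from level `K` on. -/
lemma unroll (hnf : IsNestedFractal β ψ F) {V0 : Finset E} (hV0 : ↑V0 = essFixPts ψ)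
    (K : ℕ) (hK : ∀ n, K ≤ n → ∀ b ∈ BFin ψ V0, cnt ψ V0 n b = cnt ψ V0 K b) :
    ∀ (t : ℕ) (f : E → ℝ), ∑ x ∈ VFin ψ V0 (K + t), f x
      = (∑ w : Fin t → Fin N, ∑ x ∈ VFin ψ V0 K, f (psiWord ψ (List.ofFn w) x))
        - ∑ m ∈ Finset.range t, ∑ w : Fin m → Fin N, ∑ b ∈ BFin ψ V0,
            ((cnt ψ V0 K b : ℝ) - 1) * f (psiWord ψ (List.ofFn w) b) := by
  intro t
  induction t with
  | zero =>
    intro f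
    simp [psiWord]
  | succ t ih =>
    intro f
    have hidx : K + (t + 1) = (K + t) + 1 := by ring
    rw [hidx, step_identity hnf hV0 (K + t) f]
    have hcnt : ∀ b ∈ BFin ψ V0, (cnt ψ V0 (K + t) b : ℝ) = (cnt ψ V0 K b : ℝ) := by
      intro b hb; exact_mod_cast hK (K + t) (Nat.le_add_right K t) b hb
    have hsum1 : ∑ i : Fin N, ∑ x ∈ VFin ψ V0 (K + t), f (ψ i x)
        = ∑ i : Fin N, ((∑ w : Fin t → Fin N, ∑ x ∈ VFin ψ V0 K, f (ψ i (psiWord ψ (List.ofFn w) x)))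
          - ∑ m ∈ Finset.range t, ∑ w : Fin m → Fin N, ∑ b ∈ BFin ψ V0,
              ((cnt ψ V0 K b : ℝ) - 1) * f (ψ i (psiWord ψ (List.ofFn w) b))) :=
      Finset.sum_congr rfl (fun i _ => ih (fun x => f (ψ i x)))
    rw [hsum1]
    rw [Finset.sum_sub_distrib]
    have hA : ∑ i : Fin N, ∑ w : Fin t → Fin N, ∑ x ∈ VFin ψ V0 K, f (ψ i (psiWord ψ (List.ofFn w) x))
        = ∑ w : Fin (t+1) → Fin N, ∑ x ∈ VFin ψ V0 K, f (psiWord ψ (List.ofFn w) x) := by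
      rw [word_sum_split (fun w => ∑ x ∈ VFin ψ V0 K, f (psiWord ψ (List.ofFn w) x))]
      refine Finset.sum_congr rfl (fun i _ => Finset.sum_congr rfl (fun w _ =>
        Finset.sum_congr rfl (fun x _ => ?_)))
      rw [psiWord_cons_apply]
    have hB : ∑ i : Fin N, ∑ m ∈ Finset.range t, ∑ w : Fin m → Fin N, ∑ b ∈ BFin ψ V0,
          ((cnt ψ V0 K b : ℝ) - 1) * f (ψ i (psiWord ψ (List.ofFn w) b))
        = ∑ m ∈ Finset.range t, ∑ w : Fin (m+1) → Fin N, ∑ b ∈ BFin ψ V0,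
            ((cnt ψ V0 K b : ℝ) - 1) * f (psiWord ψ (List.ofFn w) b) := by
      rw [Finset.sum_comm]
      refine Finset.sum_congr rfl (fun m _ => ?_)
      rw [word_sum_split (fun w => ∑ b ∈ BFin ψ V0,
        ((cnt ψ V0 K b : ℝ) - 1) * f (psiWord ψ (List.ofFn w) b))]
      refine Finset.sum_congr rfl (fun i _ => Finset.sum_congr rfl (fun w _ =>
        Finset.sum_congr rfl (fun b _ => ?_)))
      rw [psiWord_cons_apply]
    have hR : ∑ b ∈ BFin ψ V0, ((cnt ψ V0 (K+t) b : ℝ) - 1) * f b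
        = ∑ b ∈ BFin ψ V0, ((cnt ψ V0 K b : ℝ) - 1) * f b := by
      refine Finset.sum_congr rfl (fun b hb => ?_)
      rw [hcnt b hb]
    rw [hA, hB, hR]
    have hC : ∑ m ∈ Finset.range (t+1), ∑ w : Fin m → Fin N, ∑ b ∈ BFin ψ V0,
          ((cnt ψ V0 K b : ℝ) - 1) * f (psiWord ψ (List.ofFn w) b)
        = (∑ m ∈ Finset.range t, ∑ w : Fin (m+1) → Fin N, ∑ b ∈ BFin ψ V0,
            ((cnt ψ V0 K b : ℝ) - 1) * f (psiWord ψ (List.ofFn w) b))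
          + ∑ b ∈ BFin ψ V0, ((cnt ψ V0 K b : ℝ) - 1) * f b := by
      rw [Finset.sum_range_succ']
      congr 1
      simp [psiWord]
    rw [hC]
    ring

/-- Monotone bounded ℕ-sequences are eventually constant. -/
lemma mono_bdd_ev_const (g : ℕ → ℕ) (hg : Monotone g) (C : ℕ) (hC : ∀ n, g n ≤ C) :
    ∃ K, ∀ n, K ≤ n → g n = g K := by
  have hne : (Set.range g).Nonempty := ⟨g 0, 0, rfl⟩
  have hbdd : BddAbove (Set.range g) := ⟨C, by rintro x ⟨n, rfl⟩; exact hC n⟩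
  obtain ⟨K, hK⟩ := Nat.sSup_mem hne hbdd
  refine ⟨K, fun n hn => le_antisymm ?_ (hg hn)⟩
  rw [hK]
  exact le_csSup hbdd ⟨n, rfl⟩

/-- Convergence of the geometric convolution `∑_{m<n} r^(n-m) v m`. -/
lemma conv_tendsto {r : ℝ} (hr0 : 0 < r) (hr1 : r < 1) (v : ℕ → ℝ) (V : ℝ)
    (hv : Tendsto v atTop (nhds V)) :
    Tendsto (fun n => ∑ m ∈ Finset.range n, r ^ (n - m) * v m) atTop
      (nhds (V * (r / (1 - r)))) := by
  set S : ℕ → ℝ := fun n => ∑ m ∈ Finset.range n, r ^ (n - m) * v m with hS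
  set L : ℝ := V * (r / (1 - r)) with hL
  have hrec : ∀ n, S (n+1) = r * S n + r * v n := by
    intro n
    rw [hS]
    simp only
    rw [Finset.sum_range_succ]
    have h1 : n + 1 - n = 1 := by omega
    rw [h1, pow_one, Finset.mul_sum]
    congr 1
    refine Finset.sum_congr rfl (fun m hm => ?_)
    have hm' : m < n := Finset.mem_range.mp hm
    have : n + 1 - m = (n - m) + 1 := by omega
    rw [this, pow_succ]
    ring
  rw [Metric.tendsto_atTop]
  intro ε hε
  have h1r : 0 < 1 - r := by linarith
  set η : ℝ := ε * (1 - r) / (2 * r) with hη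
  have hηpos : 0 < η := by positivity
  obtain ⟨K, hKv⟩ := (Metric.tendsto_atTop.mp hv) η hηpos
  have hKv' : ∀ n, K ≤ n → |v n - V| ≤ η := fun n hn => le_of_lt (by
    have := hKv n hn; rwa [Real.dist_eq] at this)
  have key : ∀ j, |S (K + j) - L| ≤ r ^ j * |S K - L| + ε / 2 := by
    intro j
    induction j with
    | zero => simp; nlinarith [abs_nonneg (S K - L)]
    | succ j ih =>
      have hstep : S (K + j + 1) - L = r * (S (K + j) - L) + r * (v (K + j) - V) := by
        rw [hrec (K + j), hL]
        field_simp
        ring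
      have : |S (K + (j+1)) - L| ≤ r * |S (K + j) - L| + r * |v (K + j) - V| := by
        have : K + (j + 1) = K + j + 1 := by ring
        rw [this, hstep]
        calc |r * (S (K + j) - L) + r * (v (K + j) - V)|
            ≤ |r * (S (K + j) - L)| + |r * (v (K + j) - V)| := abs_add_le _ _
          _ = r * |S (K + j) - L| + r * |v (K + j) - V| := by
              rw [abs_mul, abs_mul, abs_of_pos hr0]
      have hvb : |v (K + j) - V| ≤ η := hKv' (K + j) (Nat.le_add_right K j)
      have hrη : r * η = ε * (1 - r) / 2 := by
        rw [hη]; field_simp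
      calc |S (K + (j+1)) - L| ≤ r * |S (K + j) - L| + r * |v (K + j) - V| := this
        _ ≤ r * (r ^ j * |S K - L| + ε / 2) + r * η := by
            have h2 : r * |v (K+j) - V| ≤ r * η := by nlinarith
            nlinarith [abs_nonneg (S (K+j) - L)]
        _ = r ^ (j+1) * |S K - L| + (r * ε / 2 + ε * (1 - r) / 2) := by
            rw [hrη]; ring
        _ ≤ r ^ (j+1) * |S K - L| + ε / 2 := by nlinarith
  -- choose J with r^J * (|S K - L| + 1) < ε / 2
  have htend0 : Tendsto (fun j => r ^ j * (|S K - L| + 1)) atTop (nhds 0) := by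
    have := (tendsto_pow_atTop_nhds_zero_of_lt_one (le_of_lt hr0) hr1).mul_const (|S K - L| + 1)
    rwa [zero_mul] at this
  obtain ⟨J, hJ⟩ := (Metric.tendsto_atTop.mp htend0) (ε / 2) (by positivity)
  refine ⟨K + J, fun n hn => ?_⟩
  have hj : J ≤ n - K := by omega
  have hn' : n = K + (n - K) := by omega
  have h1 : |S n - L| ≤ r ^ (n - K) * |S K - L| + ε / 2 := by
    have := key (n - K)
    rwa [← hn'] at this
  have h2 : r ^ (n - K) * (|S K - L| + 1) < ε / 2 := by
    have := hJ (n - K) hj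
    rw [Real.dist_eq, sub_zero] at this
    calc r ^ (n-K) * (|S K - L| + 1) ≤ |r ^ (n-K) * (|S K - L| + 1)| := le_abs_self _
      _ < ε / 2 := this
  have h3 : r ^ (n - K) * |S K - L| < ε / 2 := by
    nlinarith [pow_pos hr0 (n - K), abs_nonneg (S K - L)]
  rw [Real.dist_eq]
  linarith

end NFMore

noncomputable section NFInt

variable {d N : ℕ} {β : ℝ} {ψ : Fin N → EuclideanSpace ℝ (Fin d) → EuclideanSpace ℝ (Fin d)}
  {F : Set (EuclideanSpace ℝ (Fin d))}

local notation "E" => EuclideanSpace ℝ (Fin d)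

lemma integrable_of_bc (μ : Measure E) [IsFiniteMeasure μ] (f : E → ℝ)
    (hf : Continuous f) (C : ℝ) (hC : ∀ x, |f x| ≤ C) : Integrable f μ := by
  have := (BoundedContinuousFunction.ofNormedAddCommGroup f hf C
    (fun x => by simpa [Real.norm_eq_abs] using hC x)).integrable μ
  simpa using this

lemma integral_one_step (hnf : IsNestedFractal β ψ F) (μ : Measure E)
    [IsProbabilityMeasure μ]
    (hμss : μ = (N : ℝ≥0∞)⁻¹ • ∑ i, Measure.map (ψ i) μ)
    (f : E → ℝ) (hf : Continuous f) (C : ℝ) (hC : ∀ x, |f x| ≤ C) :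
    ∫ x, f x ∂μ = (N : ℝ)⁻¹ * ∑ i : Fin N, ∫ x, f (ψ i x) ∂μ := by
  have hmeas : ∀ i : Fin N, AEMeasurable (ψ i) μ :=
    fun i => (NF.psi_continuous hnf i).aemeasurable
  haveI : ∀ i : Fin N, IsProbabilityMeasure (Measure.map (ψ i) μ) :=
    fun i => Measure.isProbabilityMeasure_map (hmeas i)
  have hint : ∀ i ∈ Finset.univ, Integrable f (Measure.map (ψ i) μ) :=
    fun i _ => integrable_of_bc _ f hf C hC
  conv_lhs => rw [hμss]
  rw [integral_smul_measure, integral_finset_sum_measure hint]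
  have : ∀ i : Fin N, ∫ x, f x ∂(Measure.map (ψ i) μ) = ∫ x, f (ψ i x) ∂μ := by
    intro i
    exact integral_map (hmeas i) hf.aestronglyMeasurable
  rw [Finset.sum_congr rfl (fun i _ => this i)]
  congr 1
  simp

lemma integral_words (hnf : IsNestedFractal β ψ F) (μ : Measure E)
    [IsProbabilityMeasure μ]
    (hμss : μ = (N : ℝ≥0∞)⁻¹ • ∑ i, Measure.map (ψ i) μ) :
    ∀ (n : ℕ) (f : E → ℝ), Continuous f → ∀ C : ℝ, (∀ x, |f x| ≤ C) →
      ∫ x, f x ∂μ = (N : ℝ)⁻¹ ^ n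
        * ∑ w : Fin n → Fin N, ∫ x, f (psiWord ψ (List.ofFn w) x) ∂μ := by
  intro n
  induction n with
  | zero =>
    intro f hf C hC
    simp [psiWord]
  | succ n ih =>
    intro f hf C hC
    rw [integral_one_step hnf μ hμss f hf C hC]
    have : ∀ i : Fin N, ∫ x, f (ψ i x) ∂μ = (N : ℝ)⁻¹ ^ n
        * ∑ w : Fin n → Fin N, ∫ x, f (ψ i (psiWord ψ (List.ofFn w) x)) ∂μ := by
      intro i
      exact ih (fun x => f (ψ i x)) (hf.comp (NF.psi_continuous hnf i)) C (fun x => hC _)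
    rw [Finset.sum_congr rfl (fun i _ => this i)]
    rw [word_sum_split (fun w => ∫ x, f (psiWord ψ (List.ofFn w) x) ∂μ)]
    rw [← Finset.mul_sum]
    have : ∀ i : Fin N, ∀ w : Fin n → Fin N, ∀ x : E,
        f (psiWord ψ (List.ofFn (Fin.cons i w : Fin (n+1) → Fin N)) x)
          = f (ψ i (psiWord ψ (List.ofFn w) x)) := by
      intro i w x; rw [psiWord_cons_apply]
    simp_rw [this]
    rw [pow_succ]
    ring

/-- Equidistribution: averages over words applied to a fixed base point in `F` converge to
the integral against the self-similar measure. -/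
lemma avg_tendsto (hnf : IsNestedFractal β ψ F) (μ : Measure E)
    [IsProbabilityMeasure μ] (hμsupp : μ Fᶜ = 0)
    (hμss : μ = (N : ℝ≥0∞)⁻¹ • ∑ i, Measure.map (ψ i) μ)
    (f : E → ℝ) (hf : Continuous f) (C : ℝ) (hC : ∀ x, |f x| ≤ C)
    {b : E} (hb : b ∈ F) :
    Tendsto (fun m => (N : ℝ)⁻¹ ^ m * ∑ w : Fin m → Fin N, f (psiWord ψ (List.ofFn w) b))
      atTop (nhds (∫ x, f x ∂μ)) := by
  have hN : 0 < N := by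
    obtain ⟨x, hx, -⟩ := hnf.v0_nontrivial
    obtain ⟨⟨i, -⟩, -⟩ := hx
    exact Fin.pos_iff_nonempty.mpr ⟨i⟩
  have hNR : (0:ℝ) < N := by exact_mod_cast hN
  rw [Metric.tendsto_atTop]
  intro ε hε
  -- uniform continuity of f on F
  have hucont := Metric.uniformContinuousOn_iff.mp
    (hnf.F_compact.uniformContinuousOn_of_continuous hf.continuousOn)
  obtain ⟨δ, hδ, hδ'⟩ := hucont (ε / 2) (by positivity)
  -- choose m₀ with β⁻¹^m * diam F < δ
  have hb0 : (0:ℝ) ≤ β⁻¹ := le_of_lt (inv_pos.mpr (NF.beta_pos hnf))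
  have hb1 : β⁻¹ < 1 := inv_lt_one_of_one_lt₀ hnf.beta_gt_one
  have htend : Tendsto (fun m => β⁻¹ ^ m * Metric.diam F) atTop (nhds 0) := by
    have := (tendsto_pow_atTop_nhds_zero_of_lt_one hb0 hb1).mul_const (Metric.diam F)
    rwa [zero_mul] at this
  obtain ⟨M, hM⟩ := (Metric.tendsto_atTop.mp htend) δ hδ
  refine ⟨M, fun m hm => ?_⟩
  have hdiam : β⁻¹ ^ m * Metric.diam F < δ := by
    have := hM m hm
    rw [Real.dist_eq, sub_zero] at this
    calc β⁻¹ ^ m * Metric.diam F ≤ |β⁻¹ ^ m * Metric.diam F| := le_abs_self _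
      _ < δ := this
  -- the per-word error bound
  have hword : ∀ w : Fin m → Fin N,
      |f (psiWord ψ (List.ofFn w) b) - ∫ x, f (psiWord ψ (List.ofFn w) x) ∂μ| ≤ ε / 2 := by
    intro w
    have hintf : Integrable (fun x => f (psiWord ψ (List.ofFn w) x)) μ :=
      integrable_of_bc μ _ (hf.comp (NF.psiWord_continuous hnf _)) C (fun x => hC _)
    have hconst : f (psiWord ψ (List.ofFn w) b)
        = ∫ _x, f (psiWord ψ (List.ofFn w) b) ∂μ := by
      rw [integral_const]
      simp
    rw [hconst, ← integral_sub (integrable_const _) hintf]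
    have hae : ∀ᵐ x ∂μ, ‖f (psiWord ψ (List.ofFn w) b) - f (psiWord ψ (List.ofFn w) x)‖
        ≤ ε / 2 := by
      have hFae : ∀ᵐ x ∂μ, x ∈ F := by
        rw [MeasureTheory.ae_iff]
        have : {x | ¬ x ∈ F} = Fᶜ := rfl
        rw [this]
        exact hμsupp
      filter_upwards [hFae] with x hx
      rw [Real.norm_eq_abs]
      have hdd : dist (psiWord ψ (List.ofFn w) b) (psiWord ψ (List.ofFn w) x) < δ := by
        rw [NF.dist_psiWord hnf]
        have hlen : (List.ofFn w).length = m := List.length_ofFn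
        rw [hlen]
        have hle : dist b x ≤ Metric.diam F :=
          Metric.dist_le_diam_of_mem hnf.F_compact.isBounded hb hx
        calc β⁻¹ ^ m * dist b x ≤ β⁻¹ ^ m * Metric.diam F := by
              apply mul_le_mul_of_nonneg_left hle (pow_nonneg hb0 m)
          _ < δ := hdiam
      have := hδ' _ (NF.psiWord_mem_F hnf _ hb) _ (NF.psiWord_mem_F hnf _ hx) hdd
      rw [Real.dist_eq] at this
      exact le_of_lt this
    have := norm_integral_le_of_norm_le_const hae
    rw [Real.norm_eq_abs] at this
    simpa using this
  -- assemble
  rw [integral_words hnf μ hμss m f hf C hC, Real.dist_eq]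
  rw [← mul_sub, ← Finset.sum_sub_distrib]
  have hcard : (Fintype.card (Fin m → Fin N) : ℝ) = (N : ℝ) ^ m := by
    rw [Fintype.card_fun]
    simp
  calc |(N:ℝ)⁻¹ ^ m * ∑ w : Fin m → Fin N,
        (f (psiWord ψ (List.ofFn w) b) - ∫ x, f (psiWord ψ (List.ofFn w) x) ∂μ)|
      ≤ (N:ℝ)⁻¹ ^ m * ∑ w : Fin m → Fin N,
        |f (psiWord ψ (List.ofFn w) b) - ∫ x, f (psiWord ψ (List.ofFn w) x) ∂μ| := by
        rw [abs_mul, abs_of_nonneg (by positivity : (0:ℝ) ≤ (N:ℝ)⁻¹ ^ m)]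
        exact mul_le_mul_of_nonneg_left (Finset.abs_sum_le_sum_abs _ _) (by positivity)
    _ ≤ (N:ℝ)⁻¹ ^ m * ((N:ℝ) ^ m * (ε / 2)) := by
        apply mul_le_mul_of_nonneg_left _ (by positivity)
        calc ∑ w : Fin m → Fin N, |f (psiWord ψ (List.ofFn w) b)
              - ∫ x, f (psiWord ψ (List.ofFn w) x) ∂μ|
            ≤ ∑ _w : Fin m → Fin N, (ε / 2) := Finset.sum_le_sum (fun w _ => hword w)
          _ = (N:ℝ) ^ m * (ε / 2) := by
              rw [Finset.sum_const, Finset.card_univ, nsmul_eq_mul, hcard]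
    _ = ε / 2 := by
        rw [← mul_assoc, ← mul_pow, inv_mul_cancel₀ (ne_of_gt hNR), one_pow, one_mul]
    _ < ε := by linarith

/-- The vertex sets grow without bound: `|V_n| ≥ n + 1`. -/
lemma card_VFin_lower (hnf : IsNestedFractal β ψ F) {V0 : Finset E}
    (hV0 : ↑V0 = essFixPts ψ) (n : ℕ) : n + 1 ≤ (VFin ψ V0 n).card := by
  obtain ⟨x, hx, y, hy, hxy⟩ := hnf.v0_nontrivial
  obtain ⟨⟨a, ha⟩, -⟩ := hx
  set q : ℕ → E := fun j => (ψ a)^[j] y with hq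
  have hqV : ∀ j, q j ∈ VFin ψ V0 j := by
    intro j; induction j with
    | zero =>
      rw [hq]; simpa [VFin, ← Finset.mem_coe, hV0] using hy
    | succ j ih =>
      have : q (j+1) = ψ a (q j) := Function.iterate_succ_apply' (ψ a) j y
      rw [this]
      exact Finset.mem_biUnion.mpr ⟨a, Finset.mem_univ a,
        Finset.mem_image.mpr ⟨q j, ih, rfl⟩⟩
  have hdist : ∀ j, dist (q j) x = β⁻¹ ^ j * dist y x := by
    intro j; induction j with
    | zero => simp [hq]
    | succ j ih =>
      have h1 : q (j+1) = ψ a (q j) := Function.iterate_succ_apply' (ψ a) j y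
      calc dist (q (j+1)) x = dist (ψ a (q j)) (ψ a x) := by rw [h1, ha]
        _ = β⁻¹ * dist (q j) x := NF.dist_psi hnf a _ _
        _ = β⁻¹ ^ (j+1) * dist y x := by rw [ih]; ring
  have hinj : Set.InjOn q ↑(Finset.range (n+1)) := by
    intro j _ j' _ hjj
    by_contra hne
    have hd : 0 < dist y x := dist_pos.mpr (fun h => hxy h.symm)
    have hb0 : (0:ℝ) < β⁻¹ := inv_pos.mpr (NF.beta_pos hnf)
    have hb1 : β⁻¹ < 1 := inv_lt_one_of_one_lt₀ hnf.beta_gt_one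
    have := congrArg (fun z => dist z x) hjj
    simp only [hdist] at this
    have hpow : β⁻¹ ^ j = β⁻¹ ^ j' := mul_right_cancel₀ (ne_of_gt hd) this
    rcases Nat.lt_or_ge j j' with h | h
    · have := pow_lt_pow_right_of_lt_one₀ hb0 hb1 h
      linarith [hpow ▸ this]
    · have h' : j' < j := by omega
      have := pow_lt_pow_right_of_lt_one₀ hb0 hb1 h'
      linarith [hpow ▸ this]
  have hsub : (Finset.range (n+1)).image q ⊆ VFin ψ V0 n := by
    intro z hz
    obtain ⟨j, hj, rfl⟩ := Finset.mem_image.mp hz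
    have hj' : j ≤ n := by
      have := Finset.mem_range.mp hj; omega
    exact VFin_mono hV0 hj' (hqV j)
  calc n + 1 = ((Finset.range (n+1)).image q).card := by
        rw [Finset.card_image_of_injOn hinj, Finset.card_range]
    _ ≤ (VFin ψ V0 n).card := Finset.card_le_card hsub

end NFInt

noncomputable section

/-- convergence of the rescaled counting measures: letting
`μ_n := Σ_{x ∈ V_n} δ_x` denote the counting measure on the vertex set `V_n`, there exists a
constant `c_μ ∈ (0,∞)` such that the finite measures `c_μ⁻¹ N^{-n} μ_n` on `ℝ^d` converge
weakly, as `n → ∞`, to the self-similar probability measure `μ` on `F` (weak convergence being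
tested against bounded continuous functions). -/
theorem counting_measures_converge_weakly
    {d N : ℕ} (β : ℝ)
    (ψ : Fin N → EuclideanSpace ℝ (Fin d) → EuclideanSpace ℝ (Fin d))
    (F : Set (EuclideanSpace ℝ (Fin d)))
    (hnf : IsNestedFractal β ψ F)
    (μ : Measure (EuclideanSpace ℝ (Fin d))) [IsProbabilityMeasure μ]
    (hμsupp : μ Fᶜ = 0)
    (hμss : μ = (N : ℝ≥0∞)⁻¹ • ∑ i, Measure.map (ψ i) μ) :
    ∃ cμ : ℝ, 0 < cμ ∧
      ∀ f : BoundedContinuousFunction (EuclideanSpace ℝ (Fin d)) ℝ,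
        Tendsto
          (fun n : ℕ => ∫ x, f x ∂((ENNReal.ofReal (cμ⁻¹ * ((N : ℝ) ^ n)⁻¹)) •
            Measure.sum (fun x : (Vseq ψ n) => Measure.dirac (x : EuclideanSpace ℝ (Fin d)))))
          atTop (nhds (∫ x, f x ∂μ)) := by
  classical
  have hN1 : 1 < N := NF.one_lt_N hnf
  have hNR : (1:ℝ) < N := by exact_mod_cast hN1
  have hNR0 : (0:ℝ) < N := by linarith
  set r : ℝ := (N:ℝ)⁻¹ with hr
  have hr0 : 0 < r := inv_pos.mpr hNR0
  have hr1 : r < 1 := inv_lt_one_of_one_lt₀ hNR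
  set V0 : Finset (EuclideanSpace ℝ (Fin d)) := (NF.essFixPts_finite hnf).toFinset with hV0def
  have hV0 : ↑V0 = essFixPts ψ := (NF.essFixPts_finite hnf).coe_toFinset
  -- eventual constancy of the overlap counts
  have hevb : ∀ b : EuclideanSpace ℝ (Fin d),
      ∃ K, ∀ n, K ≤ n → cnt ψ V0 n b = cnt ψ V0 K b :=
    fun b => mono_bdd_ev_const _ (cnt_mono hV0 b) N (fun n => cnt_le_N n b)
  choose Kf hKf using hevb
  set K : ℕ := (BFin ψ V0).sup Kf with hKdef
  have hK : ∀ n, K ≤ n → ∀ b ∈ BFin ψ V0, cnt ψ V0 n b = cnt ψ V0 K b := by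
    intro n hn b hb
    have h1 : Kf b ≤ K := Finset.le_sup hb
    rw [hKf b n (le_trans h1 hn), hKf b K h1]
  set Ecorr : ℝ := ∑ b ∈ BFin ψ V0, ((cnt ψ V0 K b : ℝ) - 1) with hE
  set cμ : ℝ := r ^ K * (((VFin ψ V0 K).card : ℝ) - Ecorr / ((N:ℝ) - 1)) with hcμdef
  have hN0 : (N:ℝ) ≠ 0 := ne_of_gt hNR0
  have hNm1 : ((N:ℝ) - 1) ≠ 0 := by linarith
  have h1rne : (1 - r) ≠ 0 := by linarith
  -- THE KEY CONVERGENCE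
  have key : ∀ (f : EuclideanSpace ℝ (Fin d) → ℝ), Continuous f → ∀ C : ℝ,
      (∀ x, |f x| ≤ C) →
      Tendsto (fun n => r ^ n * ∑ x ∈ VFin ψ V0 n, f x) atTop
        (nhds (cμ * ∫ x, f x ∂μ)) := by
    intro f hf C hC
    have hbF : ∀ b ∈ BFin ψ V0, b ∈ F := fun b hb =>
      VFin_subset_F hnf hV0 1 b (BFin_subset_VFin hV0 0 hb)
    have hxF : ∀ x ∈ VFin ψ V0 K, x ∈ F := fun x hx => VFin_subset_F hnf hV0 K x hx
    have h1 : Tendsto (fun t => ∑ x ∈ VFin ψ V0 K,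
        (r ^ t * ∑ w : Fin t → Fin N, f (psiWord ψ (List.ofFn w) x))) atTop
        (nhds (((VFin ψ V0 K).card : ℝ) * ∫ x, f x ∂μ)) := by
      have h := tendsto_finset_sum (VFin ψ V0 K)
        (fun x hx => avg_tendsto hnf μ hμsupp hμss f hf C hC (hxF x hx))
      have heq : ∑ _x ∈ VFin ψ V0 K, ∫ x, f x ∂μ
          = ((VFin ψ V0 K).card : ℝ) * ∫ x, f x ∂μ := by
        rw [Finset.sum_const, nsmul_eq_mul]
      rw [← heq]
      exact h
    have h2 : Tendsto (fun m => ∑ b ∈ BFin ψ V0, ((cnt ψ V0 K b : ℝ) - 1) *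
        (r ^ m * ∑ w : Fin m → Fin N, f (psiWord ψ (List.ofFn w) b))) atTop
        (nhds (Ecorr * ∫ x, f x ∂μ)) := by
      have h := tendsto_finset_sum (BFin ψ V0)
        (fun b hb => ((avg_tendsto hnf μ hμsupp hμss f hf C hC (hbF b hb)).const_mul
          ((cnt ψ V0 K b : ℝ) - 1)))
      have heq : Ecorr * ∫ x, f x ∂μ
          = ∑ b ∈ BFin ψ V0, ((cnt ψ V0 K b : ℝ) - 1) * ∫ x, f x ∂μ := by
        rw [hE, Finset.sum_mul]
      rw [heq]
      exact h
    have h3 := conv_tendsto hr0 hr1 _ _ h2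
    have h4 : Tendsto (fun t => r ^ K * (∑ x ∈ VFin ψ V0 K,
          (r ^ t * ∑ w : Fin t → Fin N, f (psiWord ψ (List.ofFn w) x)))
        - r ^ K * (∑ m ∈ Finset.range t, r ^ (t - m) * (∑ b ∈ BFin ψ V0,
            ((cnt ψ V0 K b : ℝ) - 1) * (r ^ m * ∑ w : Fin m → Fin N,
              f (psiWord ψ (List.ofFn w) b)))))
        atTop (nhds (r ^ K * (((VFin ψ V0 K).card : ℝ) * ∫ x, f x ∂μ)
          - r ^ K * ((Ecorr * ∫ x, f x ∂μ) * (r / (1 - r))))) :=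
      (h1.const_mul _).sub (h3.const_mul _)
    have hr_id : r / (1 - r) = 1 / ((N:ℝ) - 1) := by
      rw [hr]
      field_simp
    have hval : r ^ K * (((VFin ψ V0 K).card : ℝ) * ∫ x, f x ∂μ)
        - r ^ K * ((Ecorr * ∫ x, f x ∂μ) * (r / (1 - r))) = cμ * ∫ x, f x ∂μ := by
      rw [hr_id, hcμdef]
      field_simp
    rw [hval] at h4
    have hfun : ∀ t, r ^ (K + t) * ∑ x ∈ VFin ψ V0 (K + t), f x
        = r ^ K * (∑ x ∈ VFin ψ V0 K,
            (r ^ t * ∑ w : Fin t → Fin N, f (psiWord ψ (List.ofFn w) x)))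
          - r ^ K * (∑ m ∈ Finset.range t, r ^ (t - m) * (∑ b ∈ BFin ψ V0,
              ((cnt ψ V0 K b : ℝ) - 1) * (r ^ m * ∑ w : Fin m → Fin N,
                f (psiWord ψ (List.ofFn w) b)))) := by
      intro t
      rw [unroll hnf hV0 K hK t f, mul_sub]
      congr 1
      · rw [pow_add, Finset.sum_comm, Finset.mul_sum, Finset.mul_sum]
        refine Finset.sum_congr rfl (fun x _ => by ring)
      · rw [pow_add, Finset.mul_sum, Finset.mul_sum]
        refine Finset.sum_congr rfl (fun m hm => ?_)
        have hmt : m < t := Finset.mem_range.mp hm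
        have hpow : r ^ (t - m) * r ^ m = r ^ t := by
          rw [← pow_add]
          congr 1
          omega
        simp only [Finset.mul_sum]
        rw [Finset.sum_comm]
        refine Finset.sum_congr rfl (fun b _ => Finset.sum_congr rfl (fun w _ => ?_))
        rw [← hpow]
        ring
    have h5 : Tendsto (fun t => r ^ (K + t) * ∑ x ∈ VFin ψ V0 (K + t), f x) atTop
        (nhds (cμ * ∫ x, f x ∂μ)) := h4.congr (fun t => (hfun t).symm)
    have h6 := h5.comp (tendsto_sub_atTop_nat K)
    refine h6.congr' ?_
    filter_upwards [eventually_ge_atTop K] with n hn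
    simp only [Function.comp_apply]
    rw [Nat.add_sub_cancel' hn]
  -- POSITIVITY
  have hone := key (fun _ => (1:ℝ)) continuous_const 1 (by intro x; simp)
  have hint1 : ∫ _x, (1:ℝ) ∂μ = 1 := by simp
  rw [hint1, mul_one] at hone
  have hone' : Tendsto (fun n => r ^ n * ((VFin ψ V0 n).card : ℝ)) atTop (nhds cμ) := by
    refine hone.congr (fun n => ?_)
    rw [Finset.sum_const, nsmul_eq_mul, mul_one]
  set c : ℕ → ℝ := fun n => r ^ n * ((VFin ψ V0 n).card : ℝ)
      - ((BFin ψ V0).card : ℝ) * r ^ n with hc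
  have hctend : Tendsto c atTop (nhds cμ) := by
    have h0 : Tendsto (fun n => ((BFin ψ V0).card : ℝ) * r ^ n) atTop (nhds 0) := by
      have := (tendsto_pow_atTop_nhds_zero_of_lt_one (le_of_lt hr0) hr1).const_mul
        (((BFin ψ V0).card : ℝ))
      simpa using this
    simpa using hone'.sub h0
  have hmono : Monotone c := by
    apply monotone_nat_of_le_succ
    intro n
    have hstep := step_identity hnf hV0 n (fun _ => (1:ℝ))
    simp only [mul_one, Finset.sum_const, nsmul_eq_mul, Finset.card_univ,
      Fintype.card_fin] at hstep
    -- hstep : card (VFin (n+1)) = N * card (VFin n) - ∑ b, (cnt - 1)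
    have hR1 : ∑ b ∈ BFin ψ V0, ((cnt ψ V0 n b : ℝ) - 1)
        ≤ ((N:ℝ) - 1) * ((BFin ψ V0).card : ℝ) := by
      calc ∑ b ∈ BFin ψ V0, ((cnt ψ V0 n b : ℝ) - 1)
          ≤ ∑ _b ∈ BFin ψ V0, ((N:ℝ) - 1) := by
            refine Finset.sum_le_sum (fun b _ => ?_)
            have := cnt_le_N (ψ := ψ) (V0 := V0) n b
            have : (cnt ψ V0 n b : ℝ) ≤ N := by exact_mod_cast this
            linarith
        _ = ((N:ℝ) - 1) * ((BFin ψ V0).card : ℝ) := by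
            rw [Finset.sum_const, nsmul_eq_mul]
            ring
    have hrpow : (0:ℝ) < r ^ (n+1) := pow_pos hr0 _
    have hrN : r * (N:ℝ) = 1 := inv_mul_cancel₀ hN0
    have hA : r ^ (n+1) * (N:ℝ) = r ^ n := by
      rw [pow_succ, mul_assoc, hrN, mul_one]
    rw [hc]
    simp only
    rw [hstep]
    nlinarith [hrpow, hA, hR1]
  have hle : ∀ n, c n ≤ cμ := fun n => hmono.ge_of_tendsto hctend n
  have hcμ : 0 < cμ := by
    set n0 := (BFin ψ V0).card with hn0
    have hcard := card_VFin_lower hnf hV0 n0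
    have hcard' : (n0:ℝ) + 1 ≤ ((VFin ψ V0 n0).card : ℝ) := by exact_mod_cast hcard
    have hpos : 0 < c n0 := by
      rw [hc]
      simp only
      have : (0:ℝ) < r ^ n0 := pow_pos hr0 _
      nlinarith
    exact lt_of_lt_of_le hpos (hle n0)
  refine ⟨cμ, hcμ, ?_⟩
  intro f
  have hbound : ∀ x, |f x| ≤ ‖f‖ := fun x => by
    have := f.norm_coe_le_norm x
    rwa [Real.norm_eq_abs] at this
  have hkey := key f f.continuous ‖f‖ hbound
  have hmeq : ∀ n : ℕ, ∫ x, f x ∂((ENNReal.ofReal (cμ⁻¹ * ((N : ℝ) ^ n)⁻¹)) •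
      Measure.sum (fun x : (Vseq ψ n) => Measure.dirac (x : EuclideanSpace ℝ (Fin d))))
      = cμ⁻¹ * (r ^ n * ∑ x ∈ VFin ψ V0 n, f x) := by
    intro n
    have hfin : (Vseq ψ n).Finite := by
      rw [← VFin_coe hV0]
      exact (VFin ψ V0 n).finite_toSet
    haveI : Fintype (Vseq ψ n) := hfin.fintype
    rw [integral_smul_measure, Measure.sum_fintype,
      integral_finset_sum_measure (fun x _ => f.integrable _)]
    have h1 : ∀ x : (Vseq ψ n), ∫ y, f y ∂(Measure.dirac (x : EuclideanSpace ℝ (Fin d)))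
        = f x := fun x => integral_dirac f _
    rw [Finset.sum_congr rfl (fun x _ => h1 x)]
    have h2 : ∑ x : (Vseq ψ n), f (x : EuclideanSpace ℝ (Fin d))
        = ∑ x ∈ VFin ψ V0 n, f x := by
      rw [Finset.sum_set_coe]
      congr 1
      ext x
      rw [Set.mem_toFinset, ← VFin_coe hV0, Finset.mem_coe]
    have hnng : (0:ℝ) ≤ cμ⁻¹ * ((N:ℝ)^n)⁻¹ :=
      mul_nonneg (inv_nonneg.mpr (le_of_lt hcμ))
        (inv_nonneg.mpr (pow_nonneg (le_of_lt hNR0) n))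
    rw [ENNReal.toReal_ofReal hnng, h2, smul_eq_mul, hr, ← inv_pow]
    ring
  have hfinal := hkey.const_mul cμ⁻¹
  have hlim : cμ⁻¹ * (cμ * ∫ x, f x ∂μ) = ∫ x, f x ∂μ := by
    rw [← mul_assoc, inv_mul_cancel₀ (ne_of_gt hcμ), one_mul]
  rw [hlim] at hfinal
  exact hfinal.congr (fun n => (hmeq n).symm)


end
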